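/- arXiv:1505.06499 — 4 statements merged into one kernel-verified Lean document; each statement's English description precedes it below -/
import Mathlib

section
/- Let n ≥ 1, δ > 0, α ∈ (0,1], M > 5 and 0 < ε < 1/2. Set Y := δ e_{n+1} ∈ ℝ^{n+1} and B_Y := the closed ball centered at Y of radius (1−ε^{2M/α})δ. Let c ∈ (0,1) and C₁ ≥ 1, let v ∈ ℝ^{n+1} be a vector with c ≤ |v| ≤ c^{-1}, and let u : B_Y → [0,∞) be a nonnegative function satisfying |u(W) − v·W| ≤ C₁ ε^{2M−5} δ for all W ∈ B_Y. Then 0 ≤ |v| − v·e_{n+1} ≤ C ε^{2M−5} and | |v| e_{n+1} − v | ≤ C ε^{M−3}, where C depends only on c and C₁. -/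
open MeasureTheory Metric Set
open scoped ENNReal NNReal InnerProductSpace

noncomputable section

abbrev ES (n : ℕ) : Type := EuclideanSpace ℝ (Fin (n + 1))

/-- The "upward" unit vector `e_{n+1}` of `ℝ^{n+1}`. -/
def eLast (n : ℕ) : ES n := EuclideanSpace.single (Fin.last n) (1 : ℝ)

lemma norm_eLast (n : ℕ) : ‖eLast n‖ = 1 := by
  simp [eLast, EuclideanSpace.norm_single]

set_option maxHeartbeats 1000000 in
/-- Claims 6.19 and 6.24. If a nonnegative function `u` on the ball
`B_Y = B(δe_{n+1}, (1-ε^{2M/α})δ)` is within `C₁ ε^{2M-5} δ` of the linear function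
`W ↦ v·W`, with `c ≤ |v| ≤ c⁻¹`, then `0 ≤ |v| - v·e_{n+1} ≤ C ε^{2M-5}` and
`||v|e_{n+1} - v| ≤ C ε^{M-3}`, where `C` depends only on `c` and `C₁`. -/
theorem gradient_points_up (n : ℕ) (hn : 1 ≤ n) (c C₁ : ℝ) (hc : 0 < c) (hc1 : c < 1)
    (hC₁ : 1 ≤ C₁) :
    ∃ C : ℝ, 0 < C ∧
      ∀ δ α M ε : ℝ, 0 < δ → 0 < α → α ≤ 1 → 5 < M → 0 < ε → ε < 1 / 2 →
      ∀ v : ES n, c ≤ ‖v‖ → ‖v‖ ≤ c⁻¹ →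
      ∀ u : ES n → ℝ,
        (∀ W ∈ closedBall (δ • eLast n) ((1 - ε ^ (2 * M / α)) * δ),
          0 ≤ u W ∧ |u W - ⟪v, W⟫_ℝ| ≤ C₁ * ε ^ (2 * M - 5) * δ) →
        (0 ≤ ‖v‖ - ⟪v, eLast n⟫_ℝ ∧ ‖v‖ - ⟪v, eLast n⟫_ℝ ≤ C * ε ^ (2 * M - 5)) ∧
          ‖‖v‖ • eLast n - v‖ ≤ C * ε ^ (M - 3) := by
  have hc0 : (0:ℝ) < c⁻¹ := by positivity
  set C₀ : ℝ := C₁ + c⁻¹ with hC₀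
  have hC₀pos : 0 < C₀ := by positivity
  refine ⟨C₀ + Real.sqrt (2 * c⁻¹ * C₀), by positivity, ?_⟩
  intro δ α M ε hδ hα hα1 hM hε hε2 v hvc hvc' u hu
  set e : ES n := eLast n with he
  have hne : ‖e‖ = 1 := norm_eLast n
  have hε1 : ε < 1 := lt_trans hε2 (by norm_num)
  have hv0 : v ≠ 0 := by
    intro h; rw [h, norm_zero] at hvc; linarith
  have hvn : (0:ℝ) < ‖v‖ := lt_of_lt_of_le hc hvc
  set r : ℝ := (1 - ε ^ (2 * M / α)) * δ with hr
  have hεp : (0:ℝ) < ε ^ (2 * M / α) := Real.rpow_pos_of_pos hε _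
  have hεlt1 : ε ^ (2 * M / α) < 1 := by
    apply Real.rpow_lt_one hε.le hε1; positivity
  have hr0 : 0 ≤ r := by
    apply mul_nonneg _ hδ.le; linarith
  -- the test point
  set W : ES n := δ • e - (r * ‖v‖⁻¹) • v with hW
  have hWmem : W ∈ closedBall (δ • e) r := by
    rw [mem_closedBall, dist_eq_norm]
    have : W - δ • e = -((r * ‖v‖⁻¹) • v) := by rw [hW]; abel
    rw [this, norm_neg, norm_smul, norm_mul, Real.norm_of_nonneg hr0,
      Real.norm_of_nonneg (inv_nonneg.2 hvn.le), mul_assoc,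
      inv_mul_cancel₀ hvn.ne', mul_one]
  have hinner : ⟪v, W⟫_ℝ = δ * ⟪v, e⟫_ℝ - r * ‖v‖ := by
    rw [hW, inner_sub_right, real_inner_smul_right, real_inner_smul_right,
      real_inner_self_eq_norm_sq]
    field_simp
  obtain ⟨hu0, hud⟩ := hu W hWmem
  have hlow : -(C₁ * ε ^ (2 * M - 5) * δ) ≤ ⟪v, W⟫_ℝ := by
    have := abs_le.1 hud
    linarith [this.2]
  -- main inequality
  have hexp : ε ^ (2 * M / α) ≤ ε ^ (2 * M - 5) := by
    apply Real.rpow_le_rpow_of_exponent_ge hε hε1.le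
    have h1 : 2 * M ≤ 2 * M / α := by
      rw [le_div_iff₀ hα]; nlinarith
    linarith
  have key : ‖v‖ - ⟪v, e⟫_ℝ ≤ C₀ * ε ^ (2 * M - 5) := by
    rw [hinner] at hlow
    have h1 : r * ‖v‖ - C₁ * ε ^ (2 * M - 5) * δ ≤ δ * ⟪v, e⟫_ℝ := by linarith
    have h2 : δ * (‖v‖ - ⟪v, e⟫_ℝ) ≤ δ * (ε ^ (2 * M / α) * ‖v‖ + C₁ * ε ^ (2 * M - 5)) := by
      rw [hr] at h1; nlinarith [h1]
    have h3 : ‖v‖ - ⟪v, e⟫_ℝ ≤ ε ^ (2 * M / α) * ‖v‖ + C₁ * ε ^ (2 * M - 5) :=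
      le_of_mul_le_mul_left h2 hδ
    have h4 : ε ^ (2 * M / α) * ‖v‖ ≤ ε ^ (2 * M - 5) * c⁻¹ := by
      apply mul_le_mul hexp hvc' hvn.le (Real.rpow_pos_of_pos hε _).le
    rw [hC₀]; linarith [h3, h4]
  have hnonneg : 0 ≤ ‖v‖ - ⟪v, e⟫_ℝ := by
    have := real_inner_le_norm v e
    rw [hne, mul_one] at this; linarith
  have hεpow : (0:ℝ) < ε ^ (2 * M - 5) := Real.rpow_pos_of_pos hε _
  have hCC : C₀ ≤ C₀ + Real.sqrt (2 * c⁻¹ * C₀) := by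
    have := Real.sqrt_nonneg (2 * c⁻¹ * C₀); linarith
  refine ⟨⟨hnonneg, le_trans key (by nlinarith)⟩, ?_⟩
  -- second part
  have hsq : ‖‖v‖ • e - v‖ ^ 2 = 2 * ‖v‖ * (‖v‖ - ⟪v, e⟫_ℝ) := by
    rw [norm_sub_sq_real, norm_smul, real_inner_smul_left,
      Real.norm_of_nonneg hvn.le, hne, mul_one, real_inner_comm e v]
    ring
  have hbound : ‖‖v‖ • e - v‖ ^ 2 ≤ 2 * c⁻¹ * C₀ * ε ^ (2 * M - 5) := by
    rw [hsq]
    calc 2 * ‖v‖ * (‖v‖ - ⟪v, e⟫_ℝ) ≤ 2 * c⁻¹ * (‖v‖ - ⟪v, e⟫_ℝ) := by nlinarith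
      _ ≤ 2 * c⁻¹ * (C₀ * ε ^ (2 * M - 5)) :=
          mul_le_mul_of_nonneg_left key (by positivity)
      _ = 2 * c⁻¹ * C₀ * ε ^ (2 * M - 5) := by ring
  have hs : ‖‖v‖ • e - v‖ ≤ Real.sqrt (2 * c⁻¹ * C₀) * ε ^ ((2 * M - 5) / 2) := by
    have h1 : ‖‖v‖ • e - v‖ = Real.sqrt (‖‖v‖ • e - v‖ ^ 2) := by
      rw [Real.sqrt_sq (norm_nonneg _)]
    rw [h1]
    calc Real.sqrt (‖‖v‖ • e - v‖ ^ 2) ≤ Real.sqrt (2 * c⁻¹ * C₀ * ε ^ (2 * M - 5)) :=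
          Real.sqrt_le_sqrt hbound
      _ = Real.sqrt (2 * c⁻¹ * C₀) * Real.sqrt (ε ^ (2 * M - 5)) := by
          rw [Real.sqrt_mul (by positivity)]
      _ = Real.sqrt (2 * c⁻¹ * C₀) * ε ^ ((2 * M - 5) / 2) := by
          congr 1
          rw [Real.sqrt_eq_rpow, ← Real.rpow_mul hε.le]
          ring_nf
  have hexp2 : ε ^ ((2 * M - 5) / 2) ≤ ε ^ (M - 3) := by
    apply Real.rpow_le_rpow_of_exponent_ge hε hε1.le; linarith
  have hεM3 : (0:ℝ) < ε ^ (M - 3) := Real.rpow_pos_of_pos hε _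
  calc ‖‖v‖ • e - v‖ ≤ Real.sqrt (2 * c⁻¹ * C₀) * ε ^ ((2 * M - 5) / 2) := hs
    _ ≤ Real.sqrt (2 * c⁻¹ * C₀) * ε ^ (M - 3) := by
        apply mul_le_mul_of_nonneg_left hexp2 (Real.sqrt_nonneg _)
    _ ≤ (C₀ + Real.sqrt (2 * c⁻¹ * C₀)) * ε ^ (M - 3) := by nlinarith
end
end

section
/- Let n ≥ 1, ℓ > 0, 0 < ε < 1/2, M > 7, and let κ, C₁, C₂ be positive constants with κ ≤ C₁. Let N be a positive integer with N ≤ C₁ ε^{-4}, and let Y₀, Y₁, …, Y_N ∈ ℝ^{n+1}. For each 0 ≤ k ≤ N let B_k be a closed ball centered at Y_k of radius ρ_k with 0 < ρ_k ≤ C₁ ε^{-3} ℓ, and suppose that Y_{k+1} ∈ B_k and |Y_{k+1} − Y_k| ≤ ℓ for 0 ≤ k ≤ N−1. Let u be continuously differentiable on an open set containing ∪_{k=0}^N B_k, and assume |∇u(W) − κ e_{n+1}| ≤ C₂ ε^{M−3} for all W ∈ ∪_{k=0}^N B_k, and |u(W) − κ W_{n+1}| ≤ C₂ ε^{M−3}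 ℓ for all W ∈ B₀. Then |u(Y_k) − κ (Y_k)_{n+1}| ≤ C k ε^{M−3} ℓ for every 1 ≤ k ≤ N, and |u(W) − κ W_{n+1}| ≤ C ε^{M−7} ℓ for every W ∈ B_N, where C depends only on C₁ and C₂. -/
open MeasureTheory Metric Set
open scoped ENNReal NNReal InnerProductSpace

noncomputable section

set_option maxHeartbeats 1000000 in
/-- Claim 6.27: propagation of an affine approximation along a chain of
overlapping balls. If `∇u` is uniformly close to `κ e_{n+1}` on a chain of at most
`C₁ε⁻⁴` balls of radii at most `C₁ε⁻³ℓ`, whose consecutive centers lie in the previous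
ball and at distance at most `ℓ`, and `u` is `C₂ε^{M-3}ℓ`-close to `κ W_{n+1}` on the
first ball, then `|u(Y_k) - κ(Y_k)_{n+1}| ≤ C k ε^{M-3} ℓ` for all `k`, and
`|u(W) - κ W_{n+1}| ≤ C ε^{M-7} ℓ` on the last ball. -/
theorem chain_propagation (n : ℕ) (hn : 1 ≤ n) (C₁ C₂ : ℝ) (hC₁ : 1 ≤ C₁) (hC₂ : 1 ≤ C₂) :
    ∃ C : ℝ, 0 < C ∧
      ∀ ℓ ε M κ : ℝ, 0 < ℓ → 0 < ε → ε < 1 / 2 → 7 < M → 0 < κ → κ ≤ C₁ →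
      ∀ N : ℕ, 0 < N → (N : ℝ) ≤ C₁ * ε⁻¹ ^ 4 →
      ∀ (Y : ℕ → ES n) (ρ : ℕ → ℝ),
        (∀ k ≤ N, 0 < ρ k ∧ ρ k ≤ C₁ * ε⁻¹ ^ 3 * ℓ) →
        (∀ k < N, Y (k + 1) ∈ closedBall (Y k) (ρ k) ∧ dist (Y (k + 1)) (Y k) ≤ ℓ) →
      ∀ (U : Set (ES n)) (u : ES n → ℝ), IsOpen U →
        (⋃ k ∈ Finset.range (N + 1), closedBall (Y k) (ρ k)) ⊆ U →
        ContDiffOn ℝ 1 u U →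
        (∀ W ∈ ⋃ k ∈ Finset.range (N + 1), closedBall (Y k) (ρ k),
          ‖gradient u W - κ • eLast n‖ ≤ C₂ * ε ^ (M - 3)) →
        (∀ W ∈ closedBall (Y 0) (ρ 0),
          |u W - κ * W (Fin.last n)| ≤ C₂ * ε ^ (M - 3) * ℓ) →
        (∀ k : ℕ, 1 ≤ k → k ≤ N →
          |u (Y k) - κ * Y k (Fin.last n)| ≤ C * k * ε ^ (M - 3) * ℓ) ∧
        ∀ W ∈ closedBall (Y N) (ρ N),
          |u W - κ * W (Fin.last n)| ≤ C * ε ^ (M - 7) * ℓ := by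
  refine ⟨3 * C₁ * C₂, by positivity, ?_⟩
  intro ℓ ε M κ hℓ hε hε2 hM hκ hκC₁ N hN hNle Y ρ hρ hchain U u hU hsub hu hgrad hbase
  have hεle1 : ε ≤ 1 := le_of_lt (lt_trans hε2 (by norm_num))
  have hC₂0 : (0:ℝ) < C₂ := lt_of_lt_of_le one_pos hC₂
  have hrpos : 0 < ε ^ (M - 3) := Real.rpow_pos_of_pos hε _
  set E : ℝ := C₂ * ε ^ (M - 3) with hE
  have hEpos : 0 < E := mul_pos hC₂0 hrpos
  set L : ES n →L[ℝ] ℝ := (InnerProductSpace.toDual ℝ (ES n)) (κ • eLast n) with hL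
  have hLapply : ∀ W : ES n, L W = κ * W (Fin.last n) := by
    intro W
    simp [hL, InnerProductSpace.toDual_apply_apply, eLast, inner_smul_left,
      EuclideanSpace.inner_single_left]
  set f : ES n → ℝ := fun W => u W - κ * W (Fin.last n) with hf
  have hfeq : ∀ W : ES n, f W = u W - L W := by
    intro W; rw [hLapply]
  -- membership of balls in the big union
  have hmem : ∀ k ≤ N, closedBall (Y k) (ρ k) ⊆
      ⋃ j ∈ Finset.range (N + 1), closedBall (Y j) (ρ j) := by
    intro k hk x hx
    exact Set.mem_biUnion (Finset.mem_range.mpr (Nat.lt_succ_of_le hk)) hx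
  -- derivative of f
  have hdiff : ∀ x ∈ U, HasFDerivAt (fun W => u W - L W) (fderiv ℝ u x - L) x := by
    intro x hx
    have hux : DifferentiableAt ℝ u x :=
      (hu.contDiffAt (hU.mem_nhds hx)).differentiableAt one_ne_zero
    exact hux.hasFDerivAt.sub L.hasFDerivAt
  -- norm bound on the derivative
  have hnorm : ∀ x ∈ ⋃ j ∈ Finset.range (N + 1), closedBall (Y j) (ρ j),
      ‖fderiv ℝ u x - L‖ ≤ E := by
    intro x hx
    have h := hgrad x hx
    have : gradient u x - κ • eLast n =
        (InnerProductSpace.toDual ℝ (ES n)).symm (fderiv ℝ u x - L) := by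
      simp [gradient, hL, map_sub]
    rw [this, LinearIsometryEquiv.norm_map] at h
    exact h
  -- Lipschitz estimate on each ball
  have hlip : ∀ k ≤ N, ∀ x ∈ closedBall (Y k) (ρ k), ∀ y ∈ closedBall (Y k) (ρ k),
      |f y - f x| ≤ E * ‖y - x‖ := by
    intro k hk x hx y hy
    have hball : closedBall (Y k) (ρ k) ⊆ U := (hmem k hk).trans hsub
    have := Convex.norm_image_sub_le_of_norm_hasFDerivWithin_le
      (f := fun W => u W - L W) (f' := fun z => fderiv ℝ u z - L)
      (fun z hz => (hdiff z (hball hz)).hasFDerivWithinAt)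
      (fun z hz => hnorm z (hmem k hk hz)) (convex_closedBall _ _) hx hy
    simpa [hfeq, Real.norm_eq_abs] using this
  have hYmem : ∀ k ≤ N, Y k ∈ closedBall (Y k) (ρ k) :=
    fun k hk => mem_closedBall_self (hρ k hk).1.le
  -- inductive bound along the chain
  have hind : ∀ k, k ≤ N → |f (Y k)| ≤ (k + 1 : ℝ) * (E * ℓ) := by
    intro k
    induction k with
    | zero =>
      intro _
      have := hbase (Y 0) (hYmem 0 (Nat.zero_le N))
      simpa [hf] using this
    | succ k ih =>
      intro hk1
      have hkN : k < N := Nat.lt_of_succ_le hk1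
      have hk : k ≤ N := hkN.le
      have hc := hchain k hkN
      have h1 := hlip k hk (Y k) (hYmem k hk) (Y (k + 1)) hc.1
      have hd : ‖Y (k + 1) - Y k‖ ≤ ℓ := by
        rw [← dist_eq_norm]; exact hc.2
      have h2 : |f (Y (k + 1)) - f (Y k)| ≤ E * ℓ :=
        h1.trans (mul_le_mul_of_nonneg_left hd hEpos.le)
      have h3 := ih hk
      have := abs_sub_abs_le_abs_sub (f (Y (k + 1))) (f (Y k))
      push_cast
      nlinarith [abs_nonneg (f (Y k))]
  have hC2C : 2 * C₂ ≤ 3 * C₁ * C₂ := by nlinarith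
  constructor
  · intro k hk1 hkN
    have h := hind k hkN
    have hk1' : (1 : ℝ) ≤ (k : ℝ) := by exact_mod_cast hk1
    have : ((k : ℝ) + 1) * (E * ℓ) ≤ 3 * C₁ * C₂ * k * ε ^ (M - 3) * ℓ := by
      have hk2 : (k : ℝ) + 1 ≤ 2 * k := by linarith
      calc ((k : ℝ) + 1) * (E * ℓ) ≤ (2 * k) * (E * ℓ) := by
            apply mul_le_mul_of_nonneg_right hk2 (by positivity)
        _ = (2 * C₂) * k * ε ^ (M - 3) * ℓ := by rw [hE]; ring
        _ ≤ (3 * C₁ * C₂) * k * ε ^ (M - 3) * ℓ := by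
            apply mul_le_mul_of_nonneg_right _ hℓ.le
            apply mul_le_mul_of_nonneg_right _ hrpos.le
            exact mul_le_mul_of_nonneg_right hC2C (by positivity)
        _ = 3 * C₁ * C₂ * k * ε ^ (M - 3) * ℓ := by ring
    calc |u (Y k) - κ * Y k (Fin.last n)| = |f (Y k)| := by rw [hf]
      _ ≤ ((k : ℝ) + 1) * (E * ℓ) := h
      _ ≤ 3 * C₁ * C₂ * k * ε ^ (M - 3) * ℓ := this
  · intro W hW
    have h1 := hlip N le_rfl (Y N) (hYmem N le_rfl) W hW
    have hd : ‖W - Y N‖ ≤ ρ N := by rw [← dist_eq_norm]; exact hW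
    have hρN := (hρ N le_rfl).2
    have h2 : |f W - f (Y N)| ≤ E * (C₁ * ε⁻¹ ^ 3 * ℓ) :=
      h1.trans (mul_le_mul_of_nonneg_left (hd.trans hρN) hEpos.le)
    have h3 := hind N le_rfl
    have hN1 : (1 : ℝ) ≤ (N : ℝ) := by exact_mod_cast hN
    -- rpow arithmetic
    have hinv4 : (ε⁻¹) ^ (4 : ℕ) = ε ^ (-4 : ℝ) := by
      rw [← Real.rpow_natCast ε⁻¹, ← Real.rpow_neg_one ε, ← Real.rpow_mul hε.le]
      norm_num
    have hinv3 : (ε⁻¹) ^ (3 : ℕ) = ε ^ (-3 : ℝ) := by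
      rw [← Real.rpow_natCast ε⁻¹, ← Real.rpow_neg_one ε, ← Real.rpow_mul hε.le]
      norm_num
    have hmul4 : ε ^ (M - 3) * ε ^ (-4 : ℝ) = ε ^ (M - 7) := by
      rw [← Real.rpow_add hε]; ring_nf
    have hmul3 : ε ^ (M - 3) * ε ^ (-3 : ℝ) = ε ^ (M - 6) := by
      rw [← Real.rpow_add hε]; ring_nf
    have h67 : ε ^ (M - 6) ≤ ε ^ (M - 7) :=
      Real.rpow_le_rpow_of_exponent_ge hε hεle1 (by linarith)
    -- |f W| ≤ |f (Y N)| + |f W - f (Y N)|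
    have htri : |f W| ≤ |f (Y N)| + |f W - f (Y N)| := by
      have := abs_sub_abs_le_abs_sub (f W) (f (Y N))
      linarith [abs_nonneg (f (Y N))]
    have hb1 : |f (Y N)| ≤ 2 * C₁ * C₂ * ε ^ (M - 7) * ℓ := by
      have hle : ((N : ℝ) + 1) * (E * ℓ) ≤ 2 * C₁ * C₂ * ε ^ (M - 7) * ℓ := by
        have hN2 : (N : ℝ) + 1 ≤ 2 * N := by linarith
        have hN3 : (2 : ℝ) * N ≤ 2 * (C₁ * ε⁻¹ ^ 4) := by linarith
        calc ((N : ℝ) + 1) * (E * ℓ)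
            ≤ (2 * (C₁ * ε⁻¹ ^ 4)) * (E * ℓ) := by
              apply mul_le_mul_of_nonneg_right (hN2.trans hN3) (by positivity)
          _ = 2 * C₁ * C₂ * (ε ^ (M - 3) * ε ^ (-4 : ℝ)) * ℓ := by
              rw [hE, hinv4]; ring
          _ = 2 * C₁ * C₂ * ε ^ (M - 7) * ℓ := by rw [hmul4]
      exact h3.trans hle
    have hb2 : |f W - f (Y N)| ≤ C₁ * C₂ * ε ^ (M - 7) * ℓ := by
      have : E * (C₁ * ε⁻¹ ^ 3 * ℓ) = C₁ * C₂ * (ε ^ (M - 3) * ε ^ (-3 : ℝ)) * ℓ := by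
        rw [hE, hinv3]; ring
      rw [this, hmul3] at h2
      refine h2.trans ?_
      apply mul_le_mul_of_nonneg_right _ hℓ.le
      exact mul_le_mul_of_nonneg_left h67 (by positivity)
    calc |u W - κ * W (Fin.last n)| = |f W| := by rw [hf]
      _ ≤ |f (Y N)| + |f W - f (Y N)| := htri
      _ ≤ 2 * C₁ * C₂ * ε ^ (M - 7) * ℓ + C₁ * C₂ * ε ^ (M - 7) * ℓ := add_le_add hb1 hb2
      _ = 3 * C₁ * C₂ * ε ^ (M - 7) * ℓ := by ring
end
end

section
/- Let n ≥ 2, ℓ > 0, K₁ ≥ 1, and let Ω ⊆ ℝ^{n+1} be an open set with boundary E = ∂Ω and δ(X) := dist(X,E). Suppose: x_Q ∈ E; Y ∈ Ω satisfies Y = δ(Y) e_{n+1} with 0 ∈ E ∩ ∂B(Y, δ(Y)); K₁^{-1} ℓ ≤ δ(Y) ≤ K₁ ℓ and |Y − x_Q| ≤ K₁ ℓ; and for every X ∈ Ω with X ≈ Y, every point w ∈ E ∩ ∂B(X, δ(X)) satisfies |w_{n+1}| ≤ K₁ ε^{M/2} ℓ. If ε is sufficiently small and M is sufficiently large, depending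 only on n and K₁, then every point X of the region 𝒪 := B(x_Q, 2ε^{-2}ℓ) ∩ {W ∈ ℝ^{n+1} : W_{n+1} > ε² ℓ} satisfies X ≈ Y; in particular 𝒪 ⊆ Ω and 𝒪 ∩ E = ∅. -/
open MeasureTheory Metric Set
open scoped ENNReal NNReal InnerProductSpace

noncomputable section

lemma abs_coord_sub_le_dist {n : ℕ} (x y : ES n) (i : Fin (n+1)) :
    |x i - y i| ≤ dist x y := by
  rw [EuclideanSpace.dist_eq, show |x i - y i| = Real.sqrt ((x i - y i)^2) from (Real.sqrt_sq_eq_abs _).symm]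
  apply Real.sqrt_le_sqrt
  have := Finset.single_le_sum (f := fun j => dist (x j) (y j) ^ 2)
    (fun j _ => sq_nonneg _) (Finset.mem_univ i)
  simpa [Real.dist_eq, sq_abs] using this

lemma coord_le_norm {n : ℕ} (x : ES n) (i : Fin (n+1)) : |x i| ≤ ‖x‖ := by
  have := abs_coord_sub_le_dist x 0 i
  simpa using this

lemma eLast_apply {n : ℕ} : eLast n (Fin.last n) = 1 := by
  simp [eLast, EuclideanSpace.single_apply]

lemma smul_eLast_apply {n : ℕ} (r : ℝ) : (r • eLast n) (Fin.last n) = r := by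
  simp [eLast, EuclideanSpace.single_apply]

lemma norm_smul_eLast {n : ℕ} (r : ℝ) : ‖r • eLast n‖ = |r| := by
  rw [norm_smul, eLast, EuclideanSpace.norm_single]
  simp [Real.norm_eq_abs]

lemma ball_infDist_frontier_subset {n : ℕ} {Ω : Set (ES n)} (hΩ : IsOpen Ω) {c : ES n}
    (hc : c ∈ Ω) : ball c (Metric.infDist c (frontier Ω)) ⊆ Ω := by
  rcases le_or_gt (Metric.infDist c (frontier Ω)) 0 with hr | hr
  · rw [ball_eq_empty.2 hr]; exact empty_subset _
  have hsub : ball c (Metric.infDist c (frontier Ω)) ⊆ interior Ω ∪ interior Ωᶜ := by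
    intro x hx
    have hxf : x ∉ frontier Ω := by
      intro hxf
      have h1 := Metric.infDist_le_dist_of_mem (x := c) hxf
      rw [mem_ball, dist_comm] at hx
      linarith
    have : x ∈ (frontier Ω)ᶜ := hxf
    rw [frontier_eq_closure_inter_closure, compl_inter, closure_compl, compl_compl] at this
    rcases this with h | h
    · exact Or.inr (by rw [interior_compl]; exact h)
    · exact Or.inl h
  have := (convex_ball c (Metric.infDist c (frontier Ω))).isPreconnected
  have hdis : Disjoint (interior Ω) (interior Ωᶜ) :=
    Disjoint.mono interior_subset interior_subset disjoint_compl_right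
  have hsubΩ : ball c (Metric.infDist c (frontier Ω)) ⊆ interior Ω :=
    this.subset_left_of_subset_union isOpen_interior isOpen_interior hdis hsub
      ⟨c, mem_ball_self hr, by rwa [hΩ.interior_eq]⟩
  exact hsubΩ.trans interior_subset

lemma add_pow_five_le {x y : ℝ} (hx : 0 ≤ x) (hy : 0 ≤ y) :
    (x + y)^5 ≤ 16*(x^5 + y^5) := by
  nlinarith [mul_nonneg (sq_nonneg (x - y)) (by positivity : (0:ℝ) ≤ 15*x^3 + 25*x^2*y + 25*x*y^2 + 15*y^3)]

lemma nat_pow5_le (q : ℕ) : (q:ℝ)^5 ≤ 100000 * (5/4:ℝ)^q := by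
  induction q with
  | zero => norm_num
  | succ q ih =>
    rcases le_or_gt q 22 with hq | hq
    · interval_cases q <;> norm_num
    · have h23 : (23:ℝ) ≤ (q:ℝ) := by exact_mod_cast hq
      have h5 : ((q:ℝ)+1)^5 ≤ (5/4) * (q:ℝ)^5 := by nlinarith [sq_nonneg ((q:ℝ) - 23), pow_pos (show (0:ℝ) < q by linarith) 3]
      have hpow : (0:ℝ) ≤ (5/4:ℝ)^q := by positivity
      calc ((q+1:ℕ):ℝ)^5 = ((q:ℝ)+1)^5 := by push_cast; ring
        _ ≤ (5/4) * (q:ℝ)^5 := h5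
        _ ≤ (5/4) * (100000 * (5/4)^q) := by nlinarith
        _ = 100000 * (5/4)^(q+1) := by ring

/-- `X ≈ Y`: `X` and `Y` are joined by a chain of at most `ε⁻¹` balls
`B(c_k, δ(c_k)/2)` whose centers satisfy `ε³ℓ ≤ δ(c_k) ≤ ε⁻³ℓ`, where `δ = dist(·,E)`. -/
def ChainRel {n : ℕ} (E : Set (ES n)) (ℓ ε : ℝ) (A B : ES n) : Prop :=
  ∃ N : ℕ, (N + 1 : ℝ) ≤ ε⁻¹ ∧ ∃ c : ℕ → ES n,
    (∀ k ≤ N, ε ^ 3 * ℓ ≤ Metric.infDist (c k) E ∧ Metric.infDist (c k) E ≤ ε⁻¹ ^ 3 * ℓ) ∧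
    A ∈ ball (c 0) (Metric.infDist (c 0) E / 2) ∧
    B ∈ ball (c N) (Metric.infDist (c N) E / 2) ∧
    ∀ k < N, (ball (c k) (Metric.infDist (c k) E / 2) ∩
      ball (c (k + 1)) (Metric.infDist (c (k + 1)) E / 2)).Nonempty

set_option maxHeartbeats 2000000 in
/-- Claim 5.40 and (5.41). Under the flatness hypothesis that every
boundary point touching an admissible ball centered at a point chain-connected to `Y` lies
at height at most `K₁ε^{M/2}ℓ`, every point of the region
`𝒪 = B(x_Q, 2ε⁻²ℓ) ∩ {W_{n+1} > ε²ℓ}` is chain-connected to `Y`; in particular `𝒪 ⊆ Ω`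
and `𝒪 ∩ E = ∅`. -/
theorem region_above_plane_connected (n : ℕ) (hn : 2 ≤ n) (K₁ : ℝ) (hK₁ : 1 ≤ K₁) :
    ∃ ε₀ M₀ : ℝ, 0 < ε₀ ∧
      ∀ ε : ℝ, 0 < ε → ε < ε₀ → ∀ M : ℝ, M₀ ≤ M → ∀ ℓ : ℝ, 0 < ℓ →
      ∀ Ω : Set (ES n), IsOpen Ω → ∀ E : Set (ES n), E = frontier Ω →
      ∀ xQ ∈ E, ∀ Y : ES n, Y ∈ Ω →
        Y = Metric.infDist Y E • eLast n →
        (0 : ES n) ∈ E → dist (0 : ES n) Y = Metric.infDist Y E →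
        K₁⁻¹ * ℓ ≤ Metric.infDist Y E → Metric.infDist Y E ≤ K₁ * ℓ →
        dist Y xQ ≤ K₁ * ℓ →
        (∀ X : ES n, X ∈ Ω → ChainRel E ℓ ε X Y →
          ∀ w ∈ E, dist w X = Metric.infDist X E →
            |w (Fin.last n)| ≤ K₁ * ε ^ (M / 2) * ℓ) →
        (∀ X ∈ ball xQ (2 * ε ^ (-2 : ℤ) * ℓ) ∩ {W : ES n | ε ^ 2 * ℓ < W (Fin.last n)},
          ChainRel E ℓ ε X Y ∧ X ∈ Ω) ∧
        (ball xQ (2 * ε ^ (-2 : ℤ) * ℓ) ∩ {W : ES n | ε ^ 2 * ℓ < W (Fin.last n)}) ∩ E = ∅ := by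
  refine ⟨(10^10 * K₁)⁻¹, 10, by positivity, ?_⟩
  intro ε hε0 hεlt M hM ℓ hℓ Ω hΩ E hE xQ hxQ Y hYΩ hYe h0E h0Y hY1 hY2 hYxQ hflat
  have hK0 : (0:ℝ) < K₁ := lt_of_lt_of_le one_pos hK₁
  set I := ε⁻¹ with hIdef
  have hI0 : (0:ℝ) < I := inv_pos.2 hε0
  have hεI : ε * I = 1 := mul_inv_cancel₀ (ne_of_gt hε0)
  have hIK : 10^10 * K₁ < I := by
    rw [hIdef, ← inv_inv (10^10 * K₁)]
    exact inv_strictAnti₀ hε0 hεlt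
  have hI1 : (1:ℝ) ≤ I := by nlinarith
  have hε1 : ε ≤ 1 := by nlinarith
  have hεK : K₁ * ε ≤ 1/10^10 := by nlinarith
  have hεsm : 10^10 * (K₁ * ε) ≤ 1 := by nlinarith
  -- σ : flatness height bound
  set σ := K₁ * ε^5 * ℓ with hσdef
  have hσ0 : 0 ≤ σ := by positivity
  have hσsmall : 2*σ ≤ ε^2*ℓ := by
    have h42 : ε^4 ≤ ε^2 := pow_le_pow_of_le_one hε0.le hε1 (by norm_num)
    have h1 : K₁ * ε^5 * 2 ≤ ε^2 := by
      nlinarith [mul_le_mul_of_nonneg_right hεK (pow_nonneg hε0.le 4)]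
    rw [hσdef]; nlinarith
  have hEclosed : IsClosed E := hE ▸ isClosed_frontier
  have hEne : E.Nonempty := ⟨0, h0E⟩
  have hball : ∀ c ∈ Ω, ball c (Metric.infDist c E) ⊆ Ω := by
    intro c hc
    rw [hE]
    exact ball_infDist_frontier_subset hΩ hc
  have hlow : ∀ Z, Z ∈ Ω → ChainRel E ℓ ε Z Y → Z (Fin.last n) - σ ≤ Metric.infDist Z E := by
    intro Z hZ hch
    obtain ⟨w, hwE, hwd⟩ := hEclosed.exists_infDist_eq_dist hEne Z
    have hflatw := hflat Z hZ hch w hwE (by rw [dist_comm]; exact hwd.symm)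
    have h1 : |Z (Fin.last n) - w (Fin.last n)| ≤ dist Z w := abs_coord_sub_le_dist Z w _
    have h2 : K₁ * ε ^ (M/2) * ℓ ≤ σ := by
      have h3 : ε ^ (M/2) ≤ ε ^ (5:ℝ) :=
        Real.rpow_le_rpow_of_exponent_ge hε0 hε1 (by linarith)
      rw [show ε ^ (5:ℝ) = ε^(5:ℕ) by rw [← Real.rpow_natCast ε 5]; norm_num] at h3
      rw [hσdef]
      exact mul_le_mul_of_nonneg_right (mul_le_mul_of_nonneg_left h3 hK0.le) hℓ.le
    have h5 := abs_le.1 hflatw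
    have h6 := abs_le.1 h1
    rw [hwd]
    linarith
    -- more numeric facts
  have hεsq : ε^2 ≤ 1 := pow_le_one₀ hε0.le hε1
  have hε2K : K₁*ε^2 < 1 := by
    nlinarith only [mul_le_mul_of_nonneg_right hεK hε0.le, hε1, hε0, hK0]
  have hε3K : K₁*ε^3 ≤ 1 := by
    nlinarith only [mul_le_mul_of_nonneg_right hεK (sq_nonneg ε), hεsq]
  have hε12 : ε ≤ 1/2 := by
    nlinarith only [hεK, mul_nonneg (sub_nonneg.2 hK₁) hε0.le]
  have hI2' : (1:ℝ) ≤ I^2 := one_le_pow₀ hI1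
  have h131 : (131:ℝ) ≤ I := by linarith only [hIK, hK₁]
  have hI2 : ε^2 * I^2 = 1 := by rw [← mul_pow, hεI, one_pow]
  have hI3 : I ≤ I^3 := by
    have h := mul_nonneg (mul_nonneg hI0.le (sub_nonneg.2 hI1))
      (show (0:ℝ) ≤ I+1 by linarith only [hI0])
    nlinarith only [h]
  have hKI2 : 2*K₁ ≤ I^2 := by nlinarith only [hIK, hK0, hK₁, sq_nonneg (I-1)]
  set dY := Metric.infDist Y E with hdYdef
  have hdY0 : 0 < dY := lt_of_lt_of_le (by positivity) hY1
  have hY1' : ℓ ≤ K₁ * dY := by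
    have h1 : K₁ * (K₁⁻¹ * ℓ) ≤ K₁ * dY := mul_le_mul_of_nonneg_left hY1 hK0.le
    rw [← mul_assoc, mul_inv_cancel₀ (ne_of_gt hK0), one_mul] at h1
    exact h1
  have hnxQ : ‖xQ‖ ≤ 2*K₁*ℓ := by
    have h1 : ‖xQ‖ = dist xQ 0 := by rw [dist_eq_norm, sub_zero]
    have h2 : dist xQ 0 ≤ dist xQ Y + dist Y 0 := dist_triangle _ _ _
    rw [dist_comm xQ Y] at h2
    have h3 : dist Y 0 = dY := by rw [dist_comm]; exact h0Y
    rw [h1]; rw [h3] at h2; linarith only [h2, hY2, hYxQ]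
  have hrad : (2 : ℝ) * ε ^ (-2:ℤ) * ℓ = 2 * I^2 * ℓ := by
    rw [hIdef, inv_pow, ← zpow_natCast ε 2, ← zpow_neg]
    norm_num
  have main : ∀ X ∈ ball xQ (2 * ε ^ (-2 : ℤ) * ℓ) ∩ {W : ES n | ε ^ 2 * ℓ < W (Fin.last n)},
      ChainRel E ℓ ε X Y ∧ X ∈ Ω := by
    rintro X ⟨hX1, hX2⟩
    rw [mem_ball, hrad] at hX1
    have hXl : ε^2*ℓ < X (Fin.last n) := hX2
    set Xl := X (Fin.last n) with hXldef
    have hXl0 : 0 < Xl := lt_of_le_of_lt (by positivity) hXl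
    have hI2ℓ : (0:ℝ) < I^2*ℓ := by positivity
    have hKℓI : K₁*ℓ ≤ I^2*ℓ :=
      mul_le_mul_of_nonneg_right (show K₁ ≤ I^2 by linarith only [hKI2, hK0]) hℓ.le
    have hnX : ‖X‖ < 3*(I^2*ℓ) := by
      have h2 : ‖X‖ = dist X 0 := by rw [dist_eq_norm, sub_zero]
      have h3 := dist_triangle X xQ 0
      have h4 : dist xQ 0 = ‖xQ‖ := by rw [dist_eq_norm, sub_zero]
      rw [h2]
      have hKI := mul_le_mul_of_nonneg_right hKI2 hℓ.le
      linarith only [h3, h4, hX1, hnxQ, hKI, hI2ℓ]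
    have hXl3 : Xl < 3*(I^2*ℓ) := by
      have h5 := coord_le_norm X (Fin.last n)
      have h6 := le_abs_self Xl
      rw [← hXldef] at h5
      linarith only [h5, h6, hnX]
    have hX'0 : (X - Xl • eLast n) (Fin.last n) = 0 := by
      have h7 : (X - Xl • eLast n) (Fin.last n)
          = X (Fin.last n) - (Xl • eLast n) (Fin.last n) := rfl
      rw [h7, smul_eLast_apply, ← hXldef, sub_self]
    have hnX' : ‖X - Xl • eLast n‖ < 6*(I^2*ℓ) := by
      have h8 := norm_sub_le X (Xl • eLast n)
      rw [norm_smul_eLast, abs_of_pos hXl0] at h8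
      linarith only [h8, hnX, hXl3]
    -- up phase count
    have hm_ex : ∃ k:ℕ, 100*(I^2*ℓ) ≤ (5/4:ℝ)^k * dY := by
      obtain ⟨k, hk⟩ := pow_unbounded_of_one_lt (100*(I^2*ℓ) / dY) (by norm_num : (1:ℝ) < 5/4)
      rw [div_lt_iff₀ hdY0] at hk
      exact ⟨k, by linarith only [hk]⟩
    set m := Nat.find hm_ex with hmdef
    have hm_spec : 100*(I^2*ℓ) ≤ (5/4:ℝ)^m * dY := Nat.find_spec hm_ex
    have hm1 : 1 ≤ m := by
      rcases Nat.eq_zero_or_pos m with h | h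
      · exfalso
        have h9 := hm_spec
        rw [h, pow_zero, one_mul] at h9
        linarith only [h9, hY2, hKℓI, hI2ℓ]
      · exact h
    set t' := (5/4:ℝ)^m * dY with ht'def
    have ht'L : 100*(I^2*ℓ) ≤ t' := hm_spec
    have ht'0 : 0 < t' := by positivity
    have ht'U : t' < 125*(I^2*ℓ) := by
      have hmin := Nat.find_min hm_ex (show m - 1 < m by omega)
      push_neg at hmin
      have h54 : (5/4:ℝ)^m = (5/4) * (5/4)^(m-1) := by
        rw [← pow_succ']
        congr 1
        omega
      rw [ht'def, h54]
      linarith only [hmin]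
    -- down phase count
    have hp_ex : ∃ k:ℕ, (4/5:ℝ)^k * t' ≤ (5/4)*Xl := by
      obtain ⟨k, hk⟩ := exists_pow_lt_of_lt_one (show (0:ℝ) < (5/4)*Xl/t' by positivity)
        (by norm_num : (4/5:ℝ) < 1)
      rw [lt_div_iff₀ ht'0] at hk
      exact ⟨k, by linarith only [hk]⟩
    set p := Nat.find hp_ex with hpdef
    have hp_spec : (4/5:ℝ)^p * t' ≤ (5/4)*Xl := Nat.find_spec hp_ex
    have hp1 : 1 ≤ p := by
      rcases Nat.eq_zero_or_pos p with h | h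
      · exfalso
        have h9 := hp_spec
        rw [h, pow_zero, one_mul] at h9
        linarith only [h9, hXl3, ht'L, hI2ℓ]
      · exact h
    have hpN : Xl < (4/5:ℝ)^p * t' := by
      have hmin := Nat.find_min hp_ex (show p - 1 < p by omega)
      push_neg at hmin
      have h45 : (4/5:ℝ)^p = (4/5) * (4/5)^(p-1) := by
        rw [← pow_succ']
        congr 1
        omega
      rw [h45]
      linarith only [hmin]
    set N := m + 1 + p with hNdef
    -- the chain
    obtain ⟨u, hu⟩ : ∃ u : ℕ → ℝ, ∀ k,
        u k = if k ≤ m then (5/4:ℝ)^k * dY else (4/5:ℝ)^(k-(m+1)) * t' := ⟨_, fun k => rfl⟩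
    obtain ⟨c, hc⟩ : ∃ c : ℕ → ES n, ∀ k,
        c k = (if k ≤ m then 0 else X - Xl • eLast n) + u k • eLast n := ⟨_, fun k => rfl⟩
    have hc0Y : c 0 = Y := by
      rw [hc, if_pos (Nat.zero_le m), hu, if_pos (Nat.zero_le m), pow_zero, one_mul, zero_add]
      exact hYe.symm
    have hcL : ∀ k, (c k) (Fin.last n) = u k := by
      intro k
      rw [hc]
      have h1 : ((if k ≤ m then (0:ES n) else X - Xl • eLast n) + u k • eLast n) (Fin.last n)
          = (if k ≤ m then (0:ES n) else X - Xl • eLast n) (Fin.last n)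
            + (u k • eLast n) (Fin.last n) := rfl
      rw [h1, smul_eLast_apply]
      split_ifs
      · simp
      · rw [hX'0, zero_add]
    have hum : u m = t' := by rw [hu, if_pos le_rfl, ht'def]
    have hum1 : u (m+1) = t' := by
      rw [hu, if_neg (by omega)]
      have h1 : m + 1 - (m+1) = 0 := by omega
      rw [h1, pow_zero, one_mul]
    have huN : u N = (4/5:ℝ)^p * t' := by
      rw [hu, if_neg (by omega)]
      congr 2
      omega
    have hu0 : ∀ k, 0 < u k := by
      intro k
      rw [hu]
      split_ifs
      · positivity
      · positivity
    have huL : ∀ k, k ≤ N → ε^2*ℓ < u k := by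
      intro k hk
      rw [hu]
      split_ifs with hkm
      · have h1 : (1:ℝ) ≤ (5/4:ℝ)^k := one_le_pow₀ (by norm_num)
        linarith only [mul_le_mul_of_nonneg_left hY1' (sq_nonneg ε),
          mul_lt_mul_of_pos_right hε2K hdY0,
          mul_le_mul_of_nonneg_right h1 hdY0.le]
      · have h4 : (4/5:ℝ)^p ≤ (4/5:ℝ)^(k-(m+1)) :=
          pow_le_pow_of_le_one (by norm_num) (by norm_num) (by omega)
        linarith only [hXl, hpN, mul_le_mul_of_nonneg_right h4 ht'0.le]
    have huU : ∀ k, k ≤ N → u k ≤ 125*(I^2*ℓ) := by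
      intro k hk
      rw [hu]
      split_ifs with hkm
      · have h1 : (5/4:ℝ)^k ≤ (5/4:ℝ)^m := pow_le_pow_right₀ (by norm_num) hkm
        have h2 : (5/4:ℝ)^k*dY ≤ t' := by
          rw [ht'def]
          exact mul_le_mul_of_nonneg_right h1 hdY0.le
        linarith only [h2, ht'U]
      · have h2 : (4/5:ℝ)^(k-(m+1)) ≤ 1 := pow_le_one₀ (by norm_num) (by norm_num)
        linarith only [mul_le_mul_of_nonneg_right h2 ht'0.le, ht'U]
    -- distances between consecutive centers
    have hcdiff_up : ∀ k, k + 1 ≤ m → dist (c (k+1)) (c k) = u k / 4 := by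
      intro k hk1
      rw [dist_eq_norm, hc (k+1), hc k, if_pos hk1, if_pos (by omega), zero_add, zero_add,
        ← sub_smul, norm_smul_eLast]
      have h1 : u (k+1) - u k = u k / 4 := by
        rw [hu (k+1), hu k, if_pos hk1, if_pos (by omega), pow_succ]
        ring
      rw [h1, abs_of_pos (by linarith only [hu0 k])]
    have hcdiff_jump : dist (c (m+1)) (c m) = ‖X - Xl • eLast n‖ := by
      rw [dist_eq_norm, hc (m+1), hc m, if_neg (by omega), if_pos le_rfl, hum1, hum, zero_add]
      congr 1
      abel
    have hcdiff_down : ∀ k, m < k → dist (c (k+1)) (c k) = u k / 5 := by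
      intro k hk1
      rw [dist_eq_norm, hc (k+1), hc k, if_neg (by omega), if_neg (by omega),
        add_sub_add_left_eq_sub, ← sub_smul, norm_smul_eLast]
      have h1 : u (k+1) - u k = -(u k / 5) := by
        rw [hu (k+1), hu k, if_neg (by omega), if_neg (by omega)]
        have h2 : k + 1 - (m+1) = (k - (m+1)) + 1 := by omega
        rw [h2, pow_succ]
        ring
      rw [h1, abs_neg, abs_of_pos (by linarith only [hu0 k])]
    have hXuN : Xl < u N := by rw [huN]; exact hpN
    have hdistX : dist X (c N) = u N - Xl := by
      rw [dist_eq_norm, hc N, if_neg (by omega)]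
      have hXX : X - (X - Xl • eLast n + u N • eLast n) = (Xl - u N) • eLast n := by
        rw [sub_smul]; abel
      rw [hXX, norm_smul_eLast, abs_of_neg (by linarith only [hXuN])]
      ring
    -- upper bound on infDist along the chain
    have hδU : ∀ k, k ≤ N → Metric.infDist (c k) E ≤ 131*(I^2*ℓ) := by
      intro k hk
      have h1 : Metric.infDist (c k) E ≤ dist (c k) 0 := Metric.infDist_le_dist_of_mem h0E
      have h2 : dist (c k) 0 = ‖c k‖ := by rw [dist_eq_norm, sub_zero]
      have h4 : ‖u k • eLast n‖ = u k := by
        rw [norm_smul_eLast, abs_of_pos (hu0 k)]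
      have h5 : ‖(if k ≤ m then (0:ES n) else X - Xl • eLast n)‖ ≤ 6*(I^2*ℓ) := by
        split_ifs
        · rw [norm_zero]; positivity
        · linarith only [hnX']
      have h6 : ‖c k‖ ≤ 6*(I^2*ℓ) + 125*(I^2*ℓ) := by
        rw [hc k]
        refine le_trans (norm_add_le _ _) ?_
        rw [h4]
        linarith only [h5, huU k hk]
      linarith only [h1, h2, h6]
    -- chain length bound
    have hNb : (N:ℝ) + 1 ≤ I := by
      have hb1 : (5/4:ℝ)^m ≤ 125*K₁*I^2 := by
        have h2 : (5/4:ℝ)^m * dY < 125*(I^2*ℓ) := by rw [← ht'def]; exact ht'U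
        have h3 : 125*(I^2*ℓ) ≤ 125*I^2*(K₁*dY) := by
          have := mul_le_mul_of_nonneg_left hY1' (show (0:ℝ) ≤ 125*I^2 by positivity)
          linarith only [this]
        have h4 : (5/4:ℝ)^m * dY < 125*K₁*I^2 * dY := by linarith only [h2, h3]
        exact le_of_lt ((mul_lt_mul_iff_of_pos_right hdY0).1 h4)
      have hb2 : (5/4:ℝ)^p ≤ 125*I^4 := by
        have h2' : (5/4:ℝ)^p * (4/5:ℝ)^p = 1 := by rw [← mul_pow]; norm_num
        have h5 : ε^2*ℓ < (4/5:ℝ)^p * t' := lt_trans hXl hpN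
        have h6 : (5/4:ℝ)^p * (ε^2*ℓ) < t' := by
          calc (5/4:ℝ)^p * (ε^2*ℓ) < (5/4:ℝ)^p * ((4/5:ℝ)^p * t') :=
                mul_lt_mul_of_pos_left h5 (by positivity)
            _ = t' := by rw [← mul_assoc, h2', one_mul]
        have h7 : (125:ℝ)*(I^2*ℓ) = 125*I^4*(ε^2*ℓ) := by
          linear_combination (-125*I^2*ℓ)*hI2
        have h8 : (5/4:ℝ)^p * (ε^2*ℓ) < 125*I^4*(ε^2*ℓ) := by
          rw [← h7]; linarith only [h6, ht'U]
        have h9 : (0:ℝ) < ε^2*ℓ := by positivity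
        exact le_of_lt ((mul_lt_mul_iff_of_pos_right h9).1 h8)
      have hm5 : ((m:ℝ))^5 ≤ 12500000*K₁*I^2 := by
        linarith only [nat_pow5_le m, hb1,
          mul_le_mul_of_nonneg_left hb1 (show (0:ℝ) ≤ 100000 by norm_num)]
      have hp5 : ((p:ℝ))^5 ≤ 12500000*I^4 := by
        linarith only [nat_pow5_le p,
          mul_le_mul_of_nonneg_left hb2 (show (0:ℝ) ≤ 100000 by norm_num)]
      have hcast : ((N:ℕ):ℝ) + 1 = (m:ℝ) + ((p:ℝ) + 2) := by
        rw [hNdef]; push_cast; ring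
      have hA := add_pow_five_le (show (0:ℝ) ≤ (m:ℝ) by positivity)
        (show (0:ℝ) ≤ (p:ℝ)+2 by positivity)
      have hB := add_pow_five_le (show (0:ℝ) ≤ (p:ℝ) by positivity)
        (show (0:ℝ) ≤ (2:ℝ) by norm_num)
      have hI4 : I^2 ≤ I^4 := by nlinarith only [hI2', hI0, sq_nonneg I]
      have hI41 : (1:ℝ) ≤ I^4 := one_le_pow₀ hI1
      have hfin : ((m:ℝ) + ((p:ℝ)+2))^5 ≤ 10^10*K₁*I^4 := by
        nlinarith only [hA, hB, hm5, hp5, hK₁, hI41,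
          mul_le_mul_of_nonneg_left hI4 hK0.le,
          mul_nonneg (sub_nonneg.2 hK₁) (pow_nonneg hI0.le 4),
          mul_le_mul_of_nonneg_left hI41 (sub_nonneg.2 hK₁)]
      have hlast : (10:ℝ)^10*K₁*I^4 ≤ I^5 := by
        have := mul_le_mul_of_nonneg_right hIK.le (pow_nonneg hI0.le 4)
        nlinarith only [this]
      have hpow : ((N:ℝ)+1)^5 ≤ I^5 := by rw [hcast]; linarith only [hfin, hlast, hcast]
      exact le_of_pow_le_pow_left₀ (by norm_num) hI0.le hpow
    -- building chains from prefixes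
    have hchain : ∀ j, j ≤ N →
        (∀ i, i ≤ j → ε^3*ℓ ≤ Metric.infDist (c i) E ∧ Metric.infDist (c i) E ≤ ε⁻¹^3*ℓ) →
        (∀ i, i < j → c (i+1) ∈ ball (c i) (Metric.infDist (c i) E / 2)) →
        ∀ A, A ∈ ball (c j) (Metric.infDist (c j) E / 2) → ChainRel E ℓ ε A Y := by
      intro j hjN hadm hstep A hA
      refine ⟨j, ?_, fun i => c (j - i), fun k hk => hadm _ (by omega), ?_, ?_, ?_⟩
      · have h1 : (j:ℝ) ≤ (N:ℝ) := by exact_mod_cast hjN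
        rw [← hIdef]
        linarith only [hNb, h1]
      · simpa using hA
      · show Y ∈ ball (c (j - j)) (Metric.infDist (c (j - j)) E / 2)
        rw [Nat.sub_self, hc0Y]
        refine mem_ball_self ?_
        rw [← hdYdef]
        linarith only [hdY0]
      · intro k hk
        have hidx : j - (k+1) + 1 = j - k := by omega
        refine ⟨c (j - k), mem_ball_self ?_, ?_⟩
        · have h2 := (hadm (j-k) (by omega)).1
          have h0 : (0:ℝ) < ε^3*ℓ := by positivity
          linarith only [h2, h0]
        · have h2 := hstep (j - (k+1)) (by omega)
          rw [hidx] at h2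
          exact h2
    have hε3ℓ : ε^3*ℓ ≤ ε^2*ℓ/2 := by
      have h := mul_nonneg (mul_nonneg (show (0:ℝ) ≤ 1/2 - ε by linarith only [hε12])
        (sq_nonneg ε)) hℓ.le
      nlinarith only [h]
    have hεℓsq : ε^2*ℓ ≤ ℓ := by nlinarith only [mul_le_mul_of_nonneg_right hεsq hℓ.le]
    have hℓI : ℓ ≤ I^2*ℓ := by nlinarith only [mul_le_mul_of_nonneg_right hI2' hℓ.le]
    have hadmY : ε^3*ℓ ≤ Metric.infDist (c 0) E ∧ Metric.infDist (c 0) E ≤ ε⁻¹^3*ℓ := by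
      rw [hc0Y, ← hdYdef]
      constructor
      · linarith only [mul_le_mul_of_nonneg_left hY1' (pow_nonneg hε0.le 3),
          mul_le_mul_of_nonneg_right hε3K hdY0.le]
      · rw [← hIdef]
        have h1 : K₁ ≤ I^3 := by linarith only [hI3, hIK, hK₁, hK0]
        linarith only [hY2, mul_le_mul_of_nonneg_right h1 hℓ.le]
    -- the main induction along the chain
    have hinv : ∀ j, j ≤ N →
        ((∀ i, i ≤ j → c i ∈ Ω ∧ (ε^3*ℓ ≤ Metric.infDist (c i) E ∧
            Metric.infDist (c i) E ≤ ε⁻¹^3*ℓ)) ∧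
         (∀ i, i < j → c (i+1) ∈ ball (c i) (Metric.infDist (c i) E / 2))) := by
      intro j
      induction j with
      | zero =>
        intro _
        refine ⟨?_, ?_⟩
        · intro i hi
          have hi0 : i = 0 := Nat.le_zero.1 hi
          subst hi0
          exact ⟨by rw [hc0Y]; exact hYΩ, hadmY⟩
        · intro i hi
          exact absurd hi (Nat.not_lt_zero i)
      | succ j ih =>
        intro hjN
        obtain ⟨hadm, hstep⟩ := ih (by omega)
        have hjN' : j ≤ N := by omega
        have hcjΩ := (hadm j le_rfl).1
        have hδj := (hadm j le_rfl).2
        have hrpos : 0 < Metric.infDist (c j) E / 2 := by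
          have h0 : (0:ℝ) < ε^3*ℓ := by positivity
          linarith only [hδj.1, h0]
        have hchj : ChainRel E ℓ ε (c j) Y :=
          hchain j hjN' (fun i hi => (hadm i hi).2) hstep (c j) (mem_ball_self hrpos)
        have hlowj : u j - σ ≤ Metric.infDist (c j) E := by
          have h := hlow (c j) hcjΩ hchj
          rwa [hcL] at h
        have hstepj : c (j+1) ∈ ball (c j) (Metric.infDist (c j) E / 2) := by
          rw [mem_ball]
          rcases Nat.lt_or_ge j m with hjm | hjm
          · rw [hcdiff_up j hjm]
            linarith only [hlowj, huL j hjN', hσsmall]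
          · rcases Nat.eq_or_lt_of_le hjm with hje | hjm'
            · subst hje
              rw [hcdiff_jump]
              have hlowj' : t' - σ ≤ Metric.infDist (c m) E := by rwa [hum] at hlowj
              linarith only [hnX', hlowj', ht'L, hσsmall, hεℓsq, hℓI, hI2ℓ]
            · rw [hcdiff_down j hjm']
              linarith only [hlowj, huL j hjN', hσsmall, hσ0]
        have hΩj1 : c (j+1) ∈ Ω := by
          refine hball (c j) hcjΩ (ball_subset_ball ?_ hstepj)
          have := (Metric.infDist_nonneg : 0 ≤ Metric.infDist (c j) E)
          linarith only [this]
        have hchj1 : ChainRel E ℓ ε (c (j+1)) Y :=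
          hchain j hjN' (fun i hi => (hadm i hi).2) hstep _ hstepj
        have hlowj1 : u (j+1) - σ ≤ Metric.infDist (c (j+1)) E := by
          have h := hlow _ hΩj1 hchj1
          rwa [hcL] at h
        have hδ1 : ε^3*ℓ ≤ Metric.infDist (c (j+1)) E := by
          linarith only [hlowj1, huL (j+1) hjN, hσsmall, hε3ℓ]
        have hδ2 : Metric.infDist (c (j+1)) E ≤ ε⁻¹^3*ℓ := by
          rw [← hIdef]
          have h2 : 131*(I^2*ℓ) ≤ I^3*ℓ := by
            have h3 := mul_le_mul_of_nonneg_right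
              (mul_le_mul_of_nonneg_right h131 (sq_nonneg I)) hℓ.le
            linarith only [h3]
          linarith only [hδU (j+1) hjN, h2]
        refine ⟨?_, ?_⟩
        · intro i hi
          rcases Nat.lt_or_ge i (j+1) with h | h
          · exact hadm i (by omega)
          · have hij : i = j+1 := by omega
            subst hij
            exact ⟨hΩj1, hδ1, hδ2⟩
        · intro i hi
          rcases Nat.lt_or_ge i j with h | h
          · exact hstep i h
          · have hij : i = j := by omega
            subst hij
            exact hstepj
    -- conclusion for X
    obtain ⟨hadm, hstep⟩ := hinv N le_rfl
    have hcNΩ := (hadm N le_rfl).1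
    have hrposN : 0 < Metric.infDist (c N) E / 2 := by
      have h0 : (0:ℝ) < ε^3*ℓ := by positivity
      linarith only [(hadm N le_rfl).2.1, h0]
    have hchN : ChainRel E ℓ ε (c N) Y :=
      hchain N le_rfl (fun i hi => (hadm i hi).2) hstep (c N) (mem_ball_self hrposN)
    have hlowN : u N - σ ≤ Metric.infDist (c N) E := by
      have h := hlow (c N) hcNΩ hchN
      rwa [hcL] at h
    have hXball : X ∈ ball (c N) (Metric.infDist (c N) E / 2) := by
      rw [mem_ball, hdistX]
      have h1 : u N ≤ (5/4)*Xl := by rw [huN]; exact hp_spec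
      linarith only [hlowN, h1, hXuN, hσsmall, hXl]
    have hXΩ : X ∈ Ω := by
      refine hball (c N) hcNΩ (ball_subset_ball ?_ hXball)
      have := (Metric.infDist_nonneg : 0 ≤ Metric.infDist (c N) E)
      linarith only [this]
    exact ⟨hchain N le_rfl (fun i hi => (hadm i hi).2) hstep X hXball, hXΩ⟩
  refine ⟨main, ?_⟩
  rw [Set.eq_empty_iff_forall_notMem]
  rintro x ⟨hxO, hxE⟩
  have hxΩ := (main x hxO).2
  rw [hE, hΩ.frontier_eq] at hxE
  exact hxE.2 hxΩ
end
end

section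
/- Let n ≥ 2, ℓ > 0, α ∈ (0,1], M > 7, 0 < ε < 1/2, and let Ω ⊆ ℝ^{n+1} be an open set with boundary E = ∂Ω and δ(X) := dist(X,E). Let x_Q ∈ E, let u : Ω ∩ B(x_Q, ε^{-8}ℓ) → [0,∞) be nonnegative, and let κ ≥ c₁ > 0 and C₁ ≥ 1. Set 𝒪 := B(x_Q, 2ε^{-2}ℓ) ∩ {W ∈ ℝ^{n+1} : W_{n+1} > ε² ℓ}, and for X ∈ Ω set B_X := the closed ball B(X, (1−ε^{2M/α})δ(X)). Assume that every X ∈ 𝒪 belongs to Ω and satisfies |u(W) − κ W_{n+1}| ≤ C₁ ε^{M−7} ℓ for all W ∈ B_X. Then, provided ε is sufficiently small and M is sufficiently large depending only on n, α, c₁ and C₁, every point Z ∈ ℝ^{n+1} with Z_{n+1} = 0 and |Z − x_Q| ≤ ε^{-2} ℓ satisfies dist(Z, E) ≤ 16 ε² ℓ. -/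
open MeasureTheory Metric Set
open scoped ENNReal NNReal InnerProductSpace

noncomputable section

set_option maxHeartbeats 2000000

lemma mem_of_dist_lt_infDist_frontier {V : Type*} [NormedAddCommGroup V] [NormedSpace ℝ V]
    {Ω : Set V} (hΩ : IsOpen Ω) {X y : V} (hX : X ∈ Ω)
    (hy : dist X y < Metric.infDist X (frontier Ω)) : y ∈ Ω := by
  by_contra hyΩ
  set S := segment ℝ X y with hS
  have hpre : IsPreconnected S := (convex_segment X y).isPreconnected
  have hns : ¬ (S ⊆ (frontier Ω)ᶜ) := by
    intro hsub
    have hU : S ⊆ interior Ω ∪ (closure Ω)ᶜ := by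
      intro p hp
      by_cases hc : p ∈ closure Ω
      · left
        have := hsub hp
        simp only [mem_compl_iff, frontier, mem_diff, not_and, not_not] at this
        exact this hc
      · right; exact hc
    have hdisj : Disjoint (interior Ω) (closure Ω)ᶜ :=
      disjoint_compl_right.mono_left interior_subset_closure
    have hXin : X ∈ S ∩ interior Ω :=
      ⟨left_mem_segment ℝ X y, by rw [hΩ.interior_eq]; exact hX⟩
    have := hpre.subset_left_of_subset_union isOpen_interior
      isClosed_closure.isOpen_compl hdisj hU ⟨X, hXin⟩
    exact hyΩ (interior_subset (this (right_mem_segment ℝ X y)))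
  obtain ⟨p, hpS, hpf⟩ := not_subset.mp hns
  simp only [mem_compl_iff, not_not] at hpf
  have h1 : Metric.infDist X (frontier Ω) ≤ dist X p := Metric.infDist_le_dist_of_mem hpf
  have h2 : dist X p + dist p y = dist X y := dist_add_dist_of_mem_segment hpS
  have : (0:ℝ) ≤ dist p y := dist_nonneg
  linarith

/-- Claim 5.42. If a nonnegative function `u` is within `C₁ε^{M-7}ℓ` of
the linear function `κ W_{n+1}` on every admissible ball `B_X` centered in the region
`𝒪 = B(x_Q, 2ε⁻²ℓ) ∩ {W_{n+1} > ε²ℓ}`, then the hyperplane `{W_{n+1} = 0}` lies within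
distance `16ε²ℓ` of `E = ∂Ω` throughout `B(x_Q, ε⁻²ℓ)`. -/
theorem plane_close_to_boundary (n : ℕ) (hn : 2 ≤ n) (α c₁ C₁ : ℝ) (hα : 0 < α)
    (hα1 : α ≤ 1) (hc₁ : 0 < c₁) (hC₁ : 1 ≤ C₁) :
    ∃ ε₀ M₀ : ℝ, 0 < ε₀ ∧
      ∀ ε : ℝ, 0 < ε → ε < ε₀ → ∀ M : ℝ, M₀ ≤ M → 7 < M → ∀ ℓ : ℝ, 0 < ℓ →
      ∀ κ : ℝ, c₁ ≤ κ →
      ∀ Ω : Set (ES n), IsOpen Ω → ∀ E : Set (ES n), E = frontier Ω →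
      ∀ xQ ∈ E, ∀ u : ES n → ℝ,
        (∀ z ∈ Ω ∩ ball xQ (ε ^ (-8 : ℤ) * ℓ), 0 ≤ u z) →
        (∀ X ∈ ball xQ (2 * ε ^ (-2 : ℤ) * ℓ) ∩ {W : ES n | ε ^ 2 * ℓ < W (Fin.last n)},
          X ∈ Ω ∧
          ∀ W ∈ closedBall X ((1 - ε ^ (2 * M / α)) * Metric.infDist X E),
            |u W - κ * W (Fin.last n)| ≤ C₁ * ε ^ (M - 7) * ℓ) →
      ∀ Z : ES n, Z (Fin.last n) = 0 → dist Z xQ ≤ ε ^ (-2 : ℤ) * ℓ →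
        Metric.infDist Z E ≤ 16 * ε ^ 2 * ℓ := by
  refine ⟨min (1/2) (c₁/C₁), 10, lt_min (by norm_num) (div_pos hc₁ (by linarith)), ?_⟩
  intro ε hε hεlt M hM hM7 ℓ hℓ κ hκ Ω hΩ E hE xQ hxQ u hu hball Z hZcoord hZdist
  have hC₁0 : (0:ℝ) < C₁ := by linarith
  have hε2 : ε < 1/2 := lt_of_lt_of_le hεlt (min_le_left _ _)
  have hεc : ε < c₁ / C₁ := lt_of_lt_of_le hεlt (min_le_right _ _)
  have hε1 : ε < 1 := by linarith
  by_contra hcon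
  push_neg at hcon
  set t : ℝ := ε ^ 2 * ℓ with ht
  have ht0 : 0 < t := by rw [ht]; positivity
  set e : ES n := EuclideanSpace.single (Fin.last n) (1:ℝ) with he
  have hne : ‖e‖ = 1 := by simp [he, EuclideanSpace.norm_single]
  set X : ES n := Z + (2 * t) • e with hX
  set W : ES n := Z + (-(5 * t)) • e with hW
  clear_value t e X W
  have hXZ : dist X Z = 2 * t := by
    rw [dist_eq_norm]
    have h : X - Z = (2 * t) • e := by rw [hX]; abel
    rw [h, norm_smul, hne, mul_one, Real.norm_eq_abs, abs_of_pos (by linarith : (0:ℝ) < 2 * t)]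
  have hWZ : dist W Z = 5 * t := by
    rw [dist_eq_norm]
    have h : W - Z = (-(5 * t)) • e := by rw [hW]; abel
    rw [h, norm_smul, hne, mul_one, Real.norm_eq_abs, abs_neg, abs_of_pos (by linarith : (0:ℝ) < 5 * t)]
  have hWX : dist W X = 7 * t := by
    rw [dist_eq_norm]
    have h : W - X = (-(7 * t)) • e := by rw [hW, hX]; module
    rw [h, norm_smul, hne, mul_one, Real.norm_eq_abs, abs_neg, abs_of_pos (by linarith : (0:ℝ) < 7 * t)]
  have hXcoord : X (Fin.last n) = 2 * t := by
    simp [hX, he, hZcoord, EuclideanSpace.single_apply]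
  have hWcoord : W (Fin.last n) = -(5 * t) := by
    simp [hW, he, hZcoord, EuclideanSpace.single_apply]
  -- zpow facts
  have hzp2 : ε ^ (-2 : ℤ) = (ε ^ 2)⁻¹ := by
    rw [show ((-2:ℤ)) = -((2:ℕ):ℤ) by norm_num, zpow_neg, zpow_natCast]
  have hzp8 : ε ^ (-8 : ℤ) = (ε ^ 8)⁻¹ := by
    rw [show ((-8:ℤ)) = -((8:ℕ):ℤ) by norm_num, zpow_neg, zpow_natCast]
  have hε2p : (0:ℝ) < ε ^ 2 := by positivity
  have hinv2pos : (0:ℝ) < (ε ^ 2)⁻¹ := by positivity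
  have hmulinv2 : (ε ^ 2)⁻¹ * ε ^ 2 = 1 := inv_mul_cancel₀ (ne_of_gt hε2p)
  have hεsq1 : ε ^ 2 ≤ 1 := by nlinarith
  have hinv2 : (1:ℝ) ≤ (ε ^ 2)⁻¹ := by nlinarith
  -- X in the admissible region
  have hXmem : X ∈ ball xQ (2 * ε ^ (-2 : ℤ) * ℓ) ∩ {W : ES n | t < W (Fin.last n)} := by
    constructor
    · rw [mem_ball]
      have htri : dist X xQ ≤ dist X Z + dist Z xQ := dist_triangle _ _ _
      have h2ε : 2 * ε ^ 2 < 1 := by nlinarith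
      have h2 : 2 * t < ε ^ (-2 : ℤ) * ℓ := by
        rw [hzp2, ht]
        nlinarith [mul_lt_mul_of_pos_right (lt_of_lt_of_le h2ε hinv2) hℓ]
      have hring : 2 * ε ^ (-2:ℤ) * ℓ = 2 * (ε ^ (-2:ℤ) * ℓ) := by ring
      rw [hring]
      linarith [hXZ ▸ htri]
    · show t < X (Fin.last n)
      rw [hXcoord]
      linarith
  obtain ⟨hXΩ, happrox⟩ := hball X hXmem
  -- infDist X E is large
  have hdX : 14 * t < Metric.infDist X E := by
    have h := Metric.infDist_le_infDist_add_dist (x := Z) (y := X) (s := E)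
    rw [dist_comm, hXZ] at h
    have h16 : 16 * t < Metric.infDist Z E := by rw [ht]; linarith
    linarith
  -- rpow facts
  have hrp1 : ε ^ (2 * M / α) ≤ ε := by
    have h1 : (1:ℝ) ≤ 2 * M / α := by
      rw [le_div_iff₀ hα]; nlinarith
    calc ε ^ (2 * M / α) ≤ ε ^ (1:ℝ) :=
          Real.rpow_le_rpow_of_exponent_ge hε hε1.le h1
      _ = ε := Real.rpow_one ε
  have hrp0 : 0 < ε ^ (2 * M / α) := Real.rpow_pos_of_pos hε _
  set r : ℝ := (1 - ε ^ (2 * M / α)) * Metric.infDist X E with hr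
  have hrge : 7 * t ≤ r := by
    have hfac : (1:ℝ)/2 ≤ 1 - ε ^ (2 * M / α) := by linarith
    nlinarith
  have hWball : W ∈ closedBall X r := by
    rw [mem_closedBall, hWX]; linarith
  have hrlt : r < Metric.infDist X E := by nlinarith
  have hWΩ : W ∈ Ω := by
    apply mem_of_dist_lt_infDist_frontier hΩ hXΩ
    rw [← hE, dist_comm]
    calc dist W X = 7 * t := hWX
      _ ≤ r := hrge
      _ < _ := hrlt
  -- W is near xQ
  have hWnear : W ∈ ball xQ (ε ^ (-8 : ℤ) * ℓ) := by
    rw [mem_ball]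
    have htri : dist W xQ ≤ dist W Z + dist Z xQ := dist_triangle _ _ _
    have key : 5 * ε ^ 2 + (ε ^ 2)⁻¹ < (ε ^ 8)⁻¹ := by
      have h6p : (0:ℝ) < ε ^ 6 := by positivity
      have h6inv : (0:ℝ) < (ε ^ 6)⁻¹ := by positivity
      have h1 : (ε ^ 8)⁻¹ = (ε ^ 6)⁻¹ * (ε ^ 2)⁻¹ := by
        rw [← mul_inv, ← pow_add]
      have hle : ε ^ 6 ≤ (1/2:ℝ) ^ 6 := pow_le_pow_left₀ hε.le hε2.le 6
      have hle' : ε ^ 6 ≤ 1/64 := by norm_num at hle ⊢; linarith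
      have h2 : (64:ℝ) ≤ (ε ^ 6)⁻¹ := by
        nlinarith [inv_mul_cancel₀ (ne_of_gt h6p),
          mul_nonneg h6inv.le (show (0:ℝ) ≤ 1/64 - ε ^ 6 by linarith)]
      have h3 : 5 * ε ^ 2 ≤ 5 * (ε ^ 2)⁻¹ := by linarith
      calc 5 * ε ^ 2 + (ε ^ 2)⁻¹ ≤ 6 * (ε ^ 2)⁻¹ := by linarith
        _ < 64 * (ε ^ 2)⁻¹ := by nlinarith [hinv2pos]
        _ ≤ (ε ^ 6)⁻¹ * (ε ^ 2)⁻¹ := mul_le_mul_of_nonneg_right h2 hinv2pos.le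
        _ = (ε ^ 8)⁻¹ := h1.symm
    have h8 : 5 * t + ε ^ (-2 : ℤ) * ℓ < ε ^ (-8 : ℤ) * ℓ := by
      rw [hzp2, hzp8, ht]
      nlinarith [mul_lt_mul_of_pos_right key hℓ]
    linarith [hWZ ▸ htri]
  have huW : 0 ≤ u W := hu W ⟨hWΩ, hWnear⟩
  have happ := happrox W hWball
  rw [hWcoord] at happ
  have habs := abs_le.mp happ
  -- bound on the error term
  have herr : C₁ * ε ^ (M - 7) * ℓ < c₁ * t := by
    have hsplit : ε ^ (M - 7) = ε ^ (M - 9) * ε ^ 2 := by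
      rw [← Real.rpow_natCast ε 2, ← Real.rpow_add hε]
      norm_num
      congr 1
      ring
    have h19 : ε ^ (M - 9) ≤ ε := by
      calc ε ^ (M - 9) ≤ ε ^ (1:ℝ) :=
            Real.rpow_le_rpow_of_exponent_ge hε hε1.le (by linarith)
        _ = ε := Real.rpow_one ε
    have hCe : C₁ * ε < c₁ := by
      rw [mul_comm]; exact (lt_div_iff₀ hC₁0).mp hεc
    have hA : C₁ * ε ^ (M - 9) < c₁ := by
      nlinarith [mul_nonneg (by linarith : (0:ℝ) ≤ C₁)
        (show (0:ℝ) ≤ ε - ε ^ (M - 9) by linarith)]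
    have := mul_lt_mul_of_pos_right hA (mul_pos hε2p hℓ)
    rw [hsplit, ht]
    nlinarith [this]
  have hfinal : 5 * c₁ * t ≤ κ * (5 * t) := by
    nlinarith [mul_nonneg (show (0:ℝ) ≤ κ - c₁ by linarith) ht0.le]
  have hub : u W - κ * (-(5 * t)) ≤ C₁ * ε ^ (M - 7) * ℓ := habs.2
  nlinarith [mul_pos hc₁ ht0]
end
end
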